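/- For all α > 0, θ > 0 and β > 0, the fourth raw moment of the extended xgamma distribution is ∫₀^∞ x⁴ · f(x; α, θ, β) dx = ((α+2)·(α+3) · (θ·α·(α+1) + β·(α+4)·(α+5))) / (θ⁴·(θ+β)). -/

import Mathlib

open MeasureTheory Real

lemma exg_aux_integrable {a r : ℝ} (ha : 0 < a) (hr : 0 < r) :
    IntegrableOn (fun x : ℝ => x ^ (a - 1) * Real.exp (-(r * x))) (Set.Ioi 0) := by
  have h := integrableOn_rpow_mul_exp_neg_mul_rpow (p := 1) (s := a - 1) (b := r)
    (by linarith) zero_lt_one hr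
  refine h.congr_fun (fun x hx => ?_) measurableSet_Ioi
  simp only [Real.rpow_one]
  ring_nf

lemma exg_aux_integral {a r : ℝ} (ha : 0 < a) (hr : 0 < r) :
    ∫ x : ℝ in Set.Ioi 0, x ^ (a - 1) * Real.exp (-(r * x))
      = Real.Gamma a / r ^ a := by
  rw [integral_rpow_mul_exp_neg_mul_Ioi ha hr, Real.div_rpow zero_le_one hr.le,
    Real.one_rpow, div_mul_eq_mul_div, one_mul]

/-- The fourth raw moment of the extended xgamma distribution. -/
theorem exg_fourth_moment (α θ β : ℝ) (hα : 0 < α) (hθ : 0 < θ) (hβ : 0 < β) :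
    ∫ x in Set.Ioi (0 : ℝ),
        x ^ 4 * ((θ ^ (α + 1) / ((θ + β) * Real.Gamma (α + 2))) * (α ^ 2 + α + θ * β * x ^ 2) *
          Real.exp (-θ * x) * x ^ (α - 1))
      = ((α + 2) * (α + 3) * (θ * α * (α + 1) + β * (α + 4) * (α + 5))) / (θ ^ 4 * (θ + β)) := by
  set C : ℝ := θ ^ (α + 1) / ((θ + β) * Real.Gamma (α + 2)) with hC
  have key : ∫ x in Set.Ioi (0 : ℝ),
        x ^ 4 * (C * (α ^ 2 + α + θ * β * x ^ 2) * Real.exp (-θ * x) * x ^ (α - 1))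
      = ∫ x in Set.Ioi (0 : ℝ),
        (C * (α ^ 2 + α)) * (x ^ (α + 4 - 1) * Real.exp (-(θ * x)))
          + (C * (θ * β)) * (x ^ (α + 6 - 1) * Real.exp (-(θ * x))) := by
    refine setIntegral_congr_fun measurableSet_Ioi (fun x hx => ?_)
    have hx0 : (0 : ℝ) < x := hx
    have h4 : x ^ (α + 4 - 1) = x ^ 4 * x ^ (α - 1) := by
      rw [show α + 4 - 1 = 4 + (α - 1) by ring, Real.rpow_add hx0,
        show (4 : ℝ) = ((4 : ℕ) : ℝ) by norm_num, Real.rpow_natCast x 4]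
    have h6 : x ^ (α + 6 - 1) = x ^ 4 * x ^ 2 * x ^ (α - 1) := by
      rw [show α + 6 - 1 = 6 + (α - 1) by ring, Real.rpow_add hx0,
        show (6 : ℝ) = ((6 : ℕ) : ℝ) by norm_num, Real.rpow_natCast x 6]
      ring
    rw [h4, h6, neg_mul]
    ring
  have I1 : IntegrableOn
      (fun x : ℝ => (C * (α ^ 2 + α)) * (x ^ (α + 4 - 1) * Real.exp (-(θ * x))))
      (Set.Ioi 0) := (exg_aux_integrable (by linarith) hθ).const_mul _
  have I2 : IntegrableOn
      (fun x : ℝ => (C * (θ * β)) * (x ^ (α + 6 - 1) * Real.exp (-(θ * x))))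
      (Set.Ioi 0) := (exg_aux_integrable (by linarith) hθ).const_mul _
  rw [key, integral_add I1 I2, MeasureTheory.integral_const_mul, MeasureTheory.integral_const_mul,
    exg_aux_integral (by linarith : (0:ℝ) < α + 4) hθ,
    exg_aux_integral (by linarith : (0:ℝ) < α + 6) hθ]
  have hG2 : 0 < Real.Gamma (α + 2) := Real.Gamma_pos_of_pos (by linarith)
  have hG4 : Real.Gamma (α + 4) = (α + 3) * ((α + 2) * Real.Gamma (α + 2)) := by
    rw [show α + 4 = (α + 3) + 1 by ring, Real.Gamma_add_one (by positivity),
      show α + 3 = (α + 2) + 1 by ring, Real.Gamma_add_one (by positivity)]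
  have hG6 : Real.Gamma (α + 6)
      = (α + 5) * ((α + 4) * ((α + 3) * ((α + 2) * Real.Gamma (α + 2)))) := by
    rw [show α + 6 = (α + 5) + 1 by ring, Real.Gamma_add_one (by positivity),
      show α + 5 = (α + 4) + 1 by ring, Real.Gamma_add_one (by positivity), hG4]
  have hθ4 : θ ^ (α + 4) = θ ^ (α + 1) * θ ^ (3 : ℕ) := by
    rw [← Real.rpow_natCast θ 3, ← Real.rpow_add hθ]; ring_nf
  have hθ6 : θ ^ (α + 6) = θ ^ (α + 1) * θ ^ (5 : ℕ) := by
    rw [← Real.rpow_natCast θ 5, ← Real.rpow_add hθ]; ring_nf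
  have hθp : (0 : ℝ) < θ ^ (α + 1) := Real.rpow_pos_of_pos hθ _
  rw [hG4, hG6, hθ4, hθ6, hC]
  field_simp
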